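/- arXiv:1206.6377 — 2 statements merged into one kernel-verified Lean document; each statement's English description precedes it below -/
import Mathlib

section
/- For every natural number n ≥ 1 and every k with 0 ≤ k ≤ n, if Y is a binomial random variable with parameters n and 1/n (so E[Y] = 1), then P(Y ≥ k) ≤ e / k!. -/
/-- Binomial tail bound: for `Y ~ Bin(n, 1/n)` and `k ≤ n`, `P(Y ≥ k) ≤ e / k!`. -/
theorem binomial_tail_le_exp_div_factorial (n k : ℕ) (hn : 1 ≤ n) (hk : k ≤ n) :
    ∑ j ∈ Finset.Icc k n,
        (n.choose j : ℝ) * (1 / n) ^ j * (1 - 1 / n) ^ (n - j)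
      ≤ Real.exp 1 / k.factorial := by
  have hn0 : (0:ℝ) < n := by exact_mod_cast hn
  have step1 : ∑ j ∈ Finset.Icc k n,
      (n.choose j : ℝ) * (1 / n) ^ j * (1 - 1 / n) ^ (n - j)
      ≤ ∑ j ∈ Finset.Icc k n, (1 : ℝ) / j.factorial := by
    apply Finset.sum_le_sum
    intro j _
    have h1 : (0:ℝ) ≤ 1 - 1/n := by
      rw [sub_nonneg, div_le_one hn0]; exact_mod_cast hn
    have h2 : (1 - 1/(n:ℝ)) ^ (n - j) ≤ 1 := by
      apply pow_le_one₀ h1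
      linarith [div_nonneg (zero_le_one) hn0.le]
    have hc : (n.choose j : ℝ) ≤ (n:ℝ)^j / j.factorial := by
      exact_mod_cast Nat.choose_le_pow_div j n
    calc (n.choose j : ℝ) * (1 / n) ^ j * (1 - 1 / n) ^ (n - j)
        ≤ (n.choose j : ℝ) * (1 / n) ^ j * 1 := by
          apply mul_le_mul_of_nonneg_left h2; positivity
      _ = (n.choose j : ℝ) * (1 / n) ^ j := by ring
      _ ≤ ((n:ℝ)^j / j.factorial) * (1 / n) ^ j := by
          apply mul_le_mul_of_nonneg_right hc; positivity
      _ = 1 / j.factorial := by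
          field_simp
          ring_nf
          rw [← mul_pow, mul_inv_cancel₀ hn0.ne', one_pow]
  have step2 : ∑ j ∈ Finset.Icc k n, (1 : ℝ) / j.factorial
      ≤ Real.exp 1 / k.factorial := by
    have : Finset.Icc k n = Finset.Ico k (n+1) := rfl
    rw [this, Finset.sum_Ico_eq_sum_range]
    have hb : ∀ m ∈ Finset.range (n + 1 - k), (1:ℝ) / (k + m).factorial
        ≤ ((1:ℝ) / k.factorial) * ((1:ℝ) / m.factorial) := by
      intro m _
      rw [div_mul_div_comm, one_mul]
      apply one_div_le_one_div_of_le (by positivity)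
      exact_mod_cast Nat.le_of_dvd (Nat.factorial_pos _)
        (Nat.factorial_mul_factorial_dvd_factorial_add k m)
    calc ∑ m ∈ Finset.range (n + 1 - k), (1:ℝ) / (k + m).factorial
        ≤ ∑ m ∈ Finset.range (n + 1 - k), ((1:ℝ) / k.factorial) * ((1:ℝ) / m.factorial) :=
          Finset.sum_le_sum hb
      _ = ((1:ℝ) / k.factorial) * ∑ m ∈ Finset.range (n + 1 - k), (1:ℝ) / m.factorial := by
          rw [Finset.mul_sum]
      _ ≤ ((1:ℝ) / k.factorial) * Real.exp 1 := by
          apply mul_le_mul_of_nonneg_left _ (by positivity)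
          have := Real.sum_le_exp_of_nonneg (x := 1) zero_le_one (n + 1 - k)
          simpa using this
      _ = Real.exp 1 / k.factorial := by ring
  exact step1.trans step2
end

section
/- Let (q_k)_{k≥0} be a sequence of reals in [0,1] satisfying q_0 ≤ exp(-c'_0) and q_k ≤ m_k^2 · q_{k-1}^2 for k ≥ 1, where m_k ≤ (90(k+N_0))^{6d}. If c'_0 - Σ_{j=1}^{∞} ln((90(j+N_0))^{12d})/2^j ≥ 1, then q_k ≤ exp(-2^k) for all k ≥ 0. -/
/-- If `q_0 ≤ exp(-c'_0)`, `q_k ≤ m_k^2 q_{k-1}^2` with `m_k ≤ (90(k+N_0))^{6d}`,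
and `c'_0 - Σ_{j≥1} ln((90(j+N_0))^{12d})/2^j ≥ 1`, then `q_k ≤ exp(-2^k)` for all `k`. -/
theorem doubly_exponential_decay (N0 d : ℕ) (hN0 : 0 < N0) (hd : 1 ≤ d)
    (c0' : ℝ) (hc0 : 0 < c0') (q m : ℕ → ℝ)
    (hq : ∀ k, q k ∈ Set.Icc (0 : ℝ) 1)
    (hm0 : ∀ k, 0 ≤ m k)
    (hm : ∀ k, 1 ≤ k → m k ≤ ((90 : ℝ) * ((k : ℝ) + N0)) ^ (6 * d))
    (hq0 : q 0 ≤ Real.exp (-c0'))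
    (hrec : ∀ k, 1 ≤ k → q k ≤ (m k) ^ 2 * (q (k - 1)) ^ 2)
    (hsum : 1 ≤ c0' -
      ∑' j : ℕ, Real.log (((90 : ℝ) * (((j : ℝ) + 1) + N0)) ^ (12 * d)) / 2 ^ (j + 1)) :
    ∀ k, q k ≤ Real.exp (-(2 : ℝ) ^ k) := by
  set f : ℕ → ℝ := fun j => Real.log (((90 : ℝ) * (((j : ℝ) + 1) + N0)) ^ (12 * d)) / 2 ^ (j + 1)
    with hf
  have hbase : ∀ j : ℕ, (1 : ℝ) ≤ (90 : ℝ) * (((j : ℝ) + 1) + N0) := by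
    intro j
    have hj : (0:ℝ) ≤ (j:ℝ) := Nat.cast_nonneg j
    have hn : (0:ℝ) ≤ (N0:ℝ) := Nat.cast_nonneg N0
    have : (1 : ℝ) ≤ ((j : ℝ) + 1 + N0) := by linarith
    nlinarith
  have hfnn : ∀ j, 0 ≤ f j := by
    intro j
    apply div_nonneg _ (by positivity)
    apply Real.log_nonneg
    exact one_le_pow₀ (hbase j)
  -- summability
  have hfs : Summable f := by
    have hg : Summable (fun j : ℕ => ((12 * d * 90 * (N0 + 1) : ℝ)) *
        (((j : ℝ) + 1) * (1 / 2 : ℝ) ^ j)) := by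
      apply Summable.mul_left
      have h1 : Summable (fun j : ℕ => (j : ℝ) * (1 / 2 : ℝ) ^ j) := by
        simpa using summable_pow_mul_geometric_of_norm_lt_one (R := ℝ) 1
          (by norm_num : ‖(1/2 : ℝ)‖ < 1)
      have h2 : Summable (fun j : ℕ => (1 / 2 : ℝ) ^ j) :=
        summable_geometric_of_lt_one (by norm_num) (by norm_num)
      simpa [add_mul] using h1.add h2
    apply Summable.of_nonneg_of_le hfnn _ hg
    intro j
    have hb := hbase j
    have hlog : Real.log (((90 : ℝ) * (((j : ℝ) + 1) + N0)) ^ (12 * d))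
        = (12 * d : ℝ) * Real.log ((90 : ℝ) * (((j : ℝ) + 1) + N0)) := by
      rw [Real.log_pow]; push_cast; ring
    have hlog2 : Real.log ((90 : ℝ) * (((j : ℝ) + 1) + N0)) ≤ (90 : ℝ) * (((j : ℝ) + 1) + N0) := by
      have := Real.log_le_sub_one_of_pos (by linarith : (0:ℝ) < (90 : ℝ) * (((j : ℝ) + 1) + N0))
      linarith
    have hjb : ((j : ℝ) + 1) + N0 ≤ ((j : ℝ) + 1) * (N0 + 1) := by
      have hj : (0:ℝ) ≤ (j:ℝ) := Nat.cast_nonneg j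
      have hn : (1:ℝ) ≤ (N0:ℝ) := by exact_mod_cast hN0
      nlinarith
    have hd1 : (1:ℝ) ≤ (d:ℝ) := by exact_mod_cast hd
    have hpow : (0:ℝ) < 2 ^ (j + 1) := by positivity
    rw [hf]
    simp only
    rw [div_le_iff₀ hpow, hlog]
    have h2 : ((1:ℝ)/2)^j * 2^(j+1) = 2 := by
      rw [pow_succ, one_div, inv_pow]
      field_simp
    calc (12 * d : ℝ) * Real.log ((90 : ℝ) * (((j : ℝ) + 1) + N0))
        ≤ (12 * d : ℝ) * ((90 : ℝ) * (((j : ℝ) + 1) + N0)) := by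
          apply mul_le_mul_of_nonneg_left hlog2 (by positivity)
      _ ≤ (12 * d : ℝ) * (90 * (((j : ℝ) + 1) * (N0 + 1))) := by
          apply mul_le_mul_of_nonneg_left _ (by positivity)
          nlinarith
      _ = (12 * d * 90 * (N0 + 1) : ℝ) * (((j : ℝ) + 1) * ((1/2:ℝ)^j * 2^(j+1))) / 2 := by
          rw [h2]; ring
      _ = 12 * ↑d * 90 * (↑N0 + 1) * ((↑j + 1) * (1 / 2) ^ j) * 2 ^ (j + 1) / 2 := by ring
      _ ≤ 12 * ↑d * 90 * (↑N0 + 1) * ((↑j + 1) * (1 / 2) ^ j) * 2 ^ (j + 1) := by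
          have : (0:ℝ) ≤ 12 * ↑d * 90 * (↑N0 + 1) * ((↑j + 1) * (1 / 2) ^ j) * 2 ^ (j + 1) := by
            positivity
          linarith
  set S : ℕ → ℝ := fun k => ∑ j ∈ Finset.range k, f j with hS
  have hStsum : ∀ k, S k ≤ ∑' j, f j := fun k => Summable.sum_le_tsum _ (fun i _ => hfnn i) hfs
  have key : ∀ k, q k ≤ Real.exp (-(2:ℝ)^k * (c0' - S k)) := by
    intro k
    induction k with
    | zero => simpa [hS] using hq0
    | succ k ih =>
      have hq1 : q (k+1) ≤ m (k+1) ^ 2 * q k ^ 2 := by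
        simpa using hrec (k+1) (Nat.le_add_left 1 k)
      have hmb : m (k+1) ≤ ((90 : ℝ) * (((k:ℝ)+1) + N0)) ^ (6 * d) := by
        have := hm (k+1) (Nat.le_add_left 1 k)
        push_cast at this ⊢
        convert this using 3
      have hqk0 : 0 ≤ q k := (hq k).1
      have hm2 : m (k+1) ^ 2 ≤ ((90 : ℝ) * (((k:ℝ)+1) + N0)) ^ (12 * d) := by
        have := pow_le_pow_left₀ (hm0 (k+1)) hmb 2
        calc m (k+1)^2 ≤ (((90 : ℝ) * (((k:ℝ)+1) + N0)) ^ (6 * d))^2 := this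
          _ = ((90 : ℝ) * (((k:ℝ)+1) + N0)) ^ (12 * d) := by
              rw [← pow_mul]; ring_nf
      have hq2 : q k ^ 2 ≤ Real.exp (-(2:ℝ)^k * (c0' - S k)) ^ 2 :=
        pow_le_pow_left₀ hqk0 ih 2
      have hbpos : (0:ℝ) < (90 : ℝ) * (((k:ℝ)+1) + N0) := by
        have := hbase k; linarith
      have hexp : ((90 : ℝ) * (((k:ℝ)+1) + N0)) ^ (12 * d)
          = Real.exp (Real.log (((90 : ℝ) * (((k:ℝ)+1) + N0)) ^ (12 * d))) := by
        rw [Real.exp_log (by positivity)]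
      have hfk : f k = Real.log (((90 : ℝ) * (((k:ℝ)+1) + N0)) ^ (12 * d)) / 2 ^ (k+1) := rfl
      calc q (k+1) ≤ m (k+1) ^ 2 * q k ^ 2 := hq1
        _ ≤ ((90 : ℝ) * (((k:ℝ)+1) + N0)) ^ (12 * d) * Real.exp (-(2:ℝ)^k * (c0' - S k)) ^ 2 := by
            apply mul_le_mul hm2 hq2 (by positivity) (by positivity)
        _ = Real.exp (Real.log (((90 : ℝ) * (((k:ℝ)+1) + N0)) ^ (12 * d))
              + 2 * (-(2:ℝ)^k * (c0' - S k))) := by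
            rw [hexp, ← Real.exp_nat_mul, ← Real.exp_add]
            norm_num
        _ ≤ Real.exp (-(2:ℝ)^(k+1) * (c0' - S (k+1))) := by
            apply Real.exp_le_exp.2
            have hSk : S (k+1) = S k + f k := by
              simp [hS, Finset.sum_range_succ]
            rw [hSk, hfk]
            have h2p : (0:ℝ) < 2^(k+1) := by positivity
            apply le_of_eq
            field_simp
            ring
  intro k
  have h1 : (1:ℝ) ≤ c0' - S k := le_trans hsum (by linarith [hStsum k])
  calc q k ≤ Real.exp (-(2:ℝ)^k * (c0' - S k)) := key k
    _ ≤ Real.exp (-(2:ℝ)^k) := by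
        apply Real.exp_le_exp.2
        have : (0:ℝ) < 2^k := by positivity
        nlinarith
end
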